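/- If π* is a D-optimal design (with M(π*) invertible, maximizing det M(π) over all designs), then max_{1≤i≤k} φ_iᵀ M(π*)⁻¹ φ_i = d. -/

import Mathlib

open Matrix BigOperators

/-- A design is a probability vector over the `k` candidate points. -/
def IsDesign {k : ℕ} (π : Fin k → ℝ) : Prop :=
  (∀ i, 0 ≤ π i) ∧ ∑ i, π i = 1

/-- The information matrix `M(π) = ∑ i, π i • φ i φ iᵀ` of a design. -/
noncomputable def infoMatrix {d k : ℕ} (φ : Fin k → (Fin d → ℝ)) (π : Fin k → ℝ) :
    Matrix (Fin d) (Fin d) ℝ :=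
  ∑ i, π i • vecMulVec (φ i) (φ i)

lemma myVecMulVec_mulVec {d : ℕ} (u v x : Fin d → ℝ) :
    vecMulVec u v *ᵥ x = (v ⬝ᵥ x) • u := by
  ext i
  simp [vecMulVec, mulVec, dotProduct, Finset.mul_sum, mul_assoc, mul_comm, mul_left_comm]

lemma myMul_vecMulVec {d : ℕ} (A : Matrix (Fin d) (Fin d) ℝ) (u v : Fin d → ℝ) :
    A * vecMulVec u v = vecMulVec (A *ᵥ u) v := by
  ext i j
  simp [mul_apply, vecMulVec, mulVec, dotProduct, Finset.sum_mul, mul_assoc]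

lemma mySmul_vecMulVec {d : ℕ} (c : ℝ) (u v : Fin d → ℝ) :
    vecMulVec (c • u) v = c • vecMulVec u v := by
  ext i j
  simp [vecMulVec, mul_assoc]

lemma myTrace_vecMulVec {d : ℕ} (u v : Fin d → ℝ) :
    (vecMulVec u v).trace = u ⬝ᵥ v := by
  simp [trace, diag, vecMulVec, dotProduct]

lemma det_smul_one_add_vecMulVec {d : ℕ} (c : ℝ) (w u : Fin d → ℝ) :
    (1 + vecMulVec (c • w) u).det = 1 + c * (u ⬝ᵥ w) := by
  rw [vecMulVec_eq Unit, det_one_add_replicateCol_mul_replicateRow]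
  simp [dotProduct_smul, smul_eq_mul]

lemma infoMatrix_posSemidef {d k : ℕ} (φ : Fin k → (Fin d → ℝ)) (π : Fin k → ℝ)
    (hπ : ∀ i, 0 ≤ π i) :
    (∑ i, π i • vecMulVec (φ i) (φ i) : Matrix (Fin d) (Fin d) ℝ).PosSemidef := by
  rw [posSemidef_iff_dotProduct_mulVec]
  constructor
  · unfold Matrix.IsHermitian
    ext i j
    simp [conjTranspose, transpose, Matrix.sum_apply, vecMulVec, mul_comm]
  · intro x
    have hsum : (∑ i, π i • vecMulVec (φ i) (φ i)) *ᵥ x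
        = ∑ i, (π i • vecMulVec (φ i) (φ i)) *ᵥ x := by
      ext j
      simp [mulVec, dotProduct, Matrix.sum_apply, Finset.sum_mul]
      rw [Finset.sum_comm]
    have hdot : star x ⬝ᵥ ∑ i, (π i • vecMulVec (φ i) (φ i)) *ᵥ x
        = ∑ i, star x ⬝ᵥ (π i • vecMulVec (φ i) (φ i)) *ᵥ x := by
      simp [dotProduct, Finset.mul_sum, Finset.sum_apply]
      rw [Finset.sum_comm]
    rw [hsum, hdot]
    refine Finset.sum_nonneg fun i _ => ?_
    rw [smul_mulVec, myVecMulVec_mulVec]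
    have : star x ⬝ᵥ π i • (φ i ⬝ᵥ x) • φ i = π i * ((φ i ⬝ᵥ x) * (x ⬝ᵥ φ i)) := by
      simp [dotProduct_smul, smul_eq_mul, mul_assoc, dotProduct_comm]
    rw [this, dotProduct_comm]
    nlinarith [hπ i, mul_self_nonneg (x ⬝ᵥ φ i)]

lemma psd_det_nonneg {d : ℕ} {M : Matrix (Fin d) (Fin d) ℝ} (hM : M.PosSemidef) :
    0 ≤ M.det := by
  rw [hM.isHermitian.det_eq_prod_eigenvalues]
  exact Finset.prod_nonneg fun i _ => hM.eigenvalues_nonneg i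

lemma trace_mul_info {d k : ℕ} (φ : Fin k → (Fin d → ℝ)) (π : Fin k → ℝ)
    (A : Matrix (Fin d) (Fin d) ℝ) :
    (A * ∑ j, π j • vecMulVec (φ j) (φ j)).trace = ∑ j, π j * (φ j ⬝ᵥ A *ᵥ φ j) := by
  rw [Matrix.mul_sum, Matrix.trace_sum]
  refine Finset.sum_congr rfl fun j _ => ?_
  rw [mul_smul_comm, trace_smul, myMul_vecMulVec, myTrace_vecMulVec, dotProduct_comm]
  simp [smul_eq_mul]

set_option maxHeartbeats 2000000 in
theorem D_optimal_max_leverage_eq_dim {d k : ℕ} (hd : 0 < d) (hk : 0 < k)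
    (φ : Fin k → (Fin d → ℝ))
    (hspan : Submodule.span ℝ (Set.range φ) = ⊤)
    (πs : Fin k → ℝ) (hπs : IsDesign πs) (hinv : IsUnit (infoMatrix φ πs))
    (hopt : ∀ π, IsDesign π → (infoMatrix φ π).det ≤ (infoMatrix φ πs).det) :
    (⨆ i, φ i ⬝ᵥ (infoMatrix φ πs)⁻¹ *ᵥ φ i) = (d : ℝ) := by
  classical
  have : Nonempty (Fin k) := Fin.pos_iff_nonempty.mp hk
  set M : Matrix (Fin d) (Fin d) ℝ := infoMatrix φ πs with hM
  set L : Fin k → ℝ := fun i => φ i ⬝ᵥ M⁻¹ *ᵥ φ i with hLdef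
  have hdet : IsUnit M.det := (Matrix.isUnit_iff_isUnit_det M).mp hinv
  have hdetne : M.det ≠ 0 := hdet.ne_zero
  have hpsd : M.PosSemidef := by rw [hM]; exact infoMatrix_posSemidef φ πs hπs.1
  have hdetpos : 0 < M.det := (psd_det_nonneg hpsd).lt_of_ne (Ne.symm hdetne)
  have hMinv : M * M⁻¹ = 1 := Matrix.mul_nonsing_inv M hdet
  have hMinv' : M⁻¹ * M = 1 := Matrix.nonsing_inv_mul M hdet
  have hd1 : (1:ℝ) ≤ (d:ℝ) := by exact_mod_cast hd
  -- Upper bound : each leverage is at most d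
  have hub : ∀ i, L i ≤ (d:ℝ) := by
    intro i
    by_contra hgt
    push_neg at hgt
    obtain ⟨Lv, hLv⟩ : ∃ x : ℝ, x = L i := ⟨_, rfl⟩
    rw [← hLv] at hgt
    have hLgt1 : (1:ℝ) < Lv := lt_of_le_of_lt hd1 hgt
    obtain ⟨c, hc⟩ : ∃ x : ℝ, x = ((d:ℝ) - 1) * (Lv - 1) := ⟨_, rfl⟩
    have hc0 : 0 ≤ c := by rw [hc]; exact mul_nonneg (by linarith) (by linarith)
    obtain ⟨e, he⟩ : ∃ x : ℝ, x = Lv - (d:ℝ) := ⟨_, rfl⟩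
    have he0 : 0 < e := by rw [he]; linarith
    have hden : 0 < c + e + 1 := by linarith
    obtain ⟨t, ht⟩ : ∃ x : ℝ, x = e / (c + e + 1) := ⟨_, rfl⟩
    have ht0 : 0 < t := by rw [ht]; exact div_pos he0 hden
    have ht1 : t < 1 := by rw [ht, div_lt_one hden]; linarith
    have h1t : (0:ℝ) < 1 - t := by linarith
    -- the perturbed design
    set πt : Fin k → ℝ := fun j => (1 - t) * πs j + t * (if j = i then 1 else 0) with hπt
    have hdes : IsDesign πt := by
      constructor
      · intro j
        have : (0:ℝ) ≤ t * (if j = i then 1 else 0) := by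
          split <;> simp <;> linarith
        have h2 : (0:ℝ) ≤ (1 - t) * πs j := mul_nonneg h1t.le (hπs.1 j)
        simp only [hπt]; linarith
      · simp only [hπt]
        rw [Finset.sum_add_distrib, ← Finset.mul_sum, hπs.2, ← Finset.mul_sum]
        simp [Finset.sum_ite_eq']
    -- the perturbed information matrix
    have hNt : infoMatrix φ πt = (1 - t) • M + t • vecMulVec (φ i) (φ i) := by
      rw [hM]
      unfold infoMatrix
      simp only [hπt, add_smul]
      rw [Finset.sum_add_distrib]
      congr 1
      · simp only [mul_smul]
        rw [← Finset.smul_sum]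
      · rw [Finset.sum_eq_single i]
        · simp
        · intro b _ hb; simp [hb]
        · simp
    -- determinant computation
    set u : Fin d → ℝ := φ i with hu
    set w : Fin d → ℝ := M⁻¹ *ᵥ u with hw
    have hMw : M *ᵥ w = u := by rw [hw, mulVec_mulVec, hMinv, one_mulVec]
    have hfact : (1 - t) • M + t • vecMulVec u u
        = M * ((1 - t) • (1 : Matrix (Fin d) (Fin d) ℝ) + t • vecMulVec w u) := by
      rw [Matrix.mul_add, mul_smul_comm, mul_one, mul_smul_comm, myMul_vecMulVec, hMw]
    have hLuw : u ⬝ᵥ w = Lv := hLv.symm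
    have hinner : ((1 - t) • (1 : Matrix (Fin d) (Fin d) ℝ) + t • vecMulVec w u).det
        = (1 - t) ^ d * (1 + (t / (1 - t)) * Lv) := by
      have hrw : (1 - t) • (1 : Matrix (Fin d) (Fin d) ℝ) + t • vecMulVec w u
          = (1 - t) • ((1 : Matrix (Fin d) (Fin d) ℝ)
              + vecMulVec ((t / (1 - t)) • w) u) := by
        rw [smul_add, mySmul_vecMulVec, smul_smul]
        congr 2
        field_simp
      rw [hrw, Matrix.det_smul, det_smul_one_add_vecMulVec, hLuw]
      simp [Fintype.card_fin]
    have hdetNt : (infoMatrix φ πt).det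
        = M.det * ((1 - t) ^ d * (1 + (t / (1 - t)) * Lv)) := by
      rw [hNt, hfact, det_mul, hinner]
    have hle : (infoMatrix φ πt).det ≤ M.det := hopt πt hdes
    rw [hdetNt] at hle
    have hkey : (1 - t) ^ d * (1 + (t / (1 - t)) * Lv) ≤ 1 := by
      nlinarith [hdetpos]
    -- rewrite the product
    have hdpow : (1 - t) ^ d = (1 - t) ^ (d - 1) * (1 - t) := by
      conv_lhs => rw [show d = (d - 1) + 1 by omega]
      rw [pow_succ]
    have hprod : (1 - t) ^ d * (1 + (t / (1 - t)) * Lv)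
        = (1 - t) ^ (d - 1) * (1 - t + t * Lv) := by
      rw [hdpow]
      have : (1 - t) * (1 + (t / (1 - t)) * Lv) = 1 - t + t * Lv := by
        field_simp
      rw [mul_assoc, this]
    rw [hprod] at hkey
    -- Bernoulli
    have hbern : 1 - ((d:ℝ) - 1) * t ≤ (1 - t) ^ (d - 1) := by
      have hB := one_add_mul_le_pow (a := -t) (by linarith) (d - 1)
      have hcast : (((d - 1 : ℕ)) : ℝ) = (d:ℝ) - 1 := by
        have : (1:ℕ) ≤ d := hd
        push_cast [Nat.cast_sub this]
        ring
      rw [hcast] at hB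
      calc 1 - ((d:ℝ) - 1) * t = 1 + ((d:ℝ) - 1) * (-t) := by ring
        _ ≤ (1 + -t) ^ (d - 1) := hB
        _ = (1 - t) ^ (d - 1) := by ring_nf
    have hC : (0:ℝ) < 1 - t + t * Lv := by nlinarith
    have hchain : (1 - ((d:ℝ) - 1) * t) * (1 - t + t * Lv) ≤ 1 :=
      le_trans (mul_le_mul_of_nonneg_right hbern hC.le) hkey
    have hct : c * t < e := by
      have heq : c * t * (c + e + 1) = c * e := by
        rw [ht]; field_simp
      nlinarith [he0, hden, hc0]
    have hexp : (1 - ((d:ℝ) - 1) * t) * (1 - t + t * Lv) = 1 + t * e - c * (t * t) := by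
      rw [hc, he]; ring
    rw [hexp] at hchain
    nlinarith [mul_pos ht0 (sub_pos.mpr hct)]
  -- Lower bound via trace identity
  have hsum : ∑ j, πs j * L j = (d:ℝ) := by
    have h0 : (M⁻¹ * M).trace = (d:ℝ) := by
      rw [hMinv']; simp
    have hM' : M = ∑ j, πs j • vecMulVec (φ j) (φ j) := hM
    calc ∑ j, πs j * L j
        = (M⁻¹ * ∑ j, πs j • vecMulVec (φ j) (φ j)).trace :=
          (trace_mul_info φ πs M⁻¹).symm
      _ = (M⁻¹ * M).trace := by rw [← hM']
      _ = (d:ℝ) := h0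
  have hbdd : BddAbove (Set.range L) := (Set.finite_range L).bddAbove
  refine le_antisymm (ciSup_le hub) ?_
  calc (d:ℝ) = ∑ j, πs j * L j := hsum.symm
    _ ≤ ∑ j, πs j * (⨆ i, L i) :=
        Finset.sum_le_sum fun j _ => mul_le_mul_of_nonneg_left (le_ciSup hbdd j) (hπs.1 j)
    _ = ⨆ i, L i := by rw [← Finset.sum_mul, hπs.2, one_mul]
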